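/- arXiv:2510.22520 — 3 statements merged into one kernel-verified Lean document; each statement's English description precedes it below -/
import Mathlib

section
/- Let G be a connected graph with maximum degree d_max, and consider a randomized depth-first search with a uniformly random root and, independently for each vertex, a uniformly random permutation of its neighbors determining exploration order. Then for any edge e = {u,v} of G, the probability that e belongs to the resulting DFS spanning tree is at least 1/max(deg(u), deg(v)), and hence at least 1/d_max. -/
/-!
STATEMENT 0: For a connected graph `G` with a randomized DFS (uniformly random root,
and independently for each vertex a uniformly random permutation of its neighbors
determining exploration order), every edge `{u,v}` belongs to the resulting DFS
spanning tree with probability at least `1 / max (deg u) (deg v)`, hence at least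
`1 / d_max` where `d_max` is the maximum degree.
-/

open scoped Classical

namespace RSNN

/-- Iterative depth-first search with explicit fuel.  Stack entries are pairs
`(vertex, optional parent)`; the output lists, in discovery order, each newly
discovered vertex together with the parent along whose edge it was discovered. -/
def dfsRun {n : ℕ} (adj : Fin n → List (Fin n)) :
    ℕ → List (Fin n × Option (Fin n)) → List (Fin n) → List (Fin n × Option (Fin n))
  | 0, _, _ => []
  | _ + 1, [], _ => []
  | fuel + 1, (v, p) :: stack, visited =>
    if v ∈ visited then dfsRun adj fuel stack visited
    else (v, p) :: dfsRun adj fuel ((adj v).map (fun w => (w, some v)) ++ stack) (v :: visited)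

/-- DFS from root `r`, with enough fuel to finish on any graph on `Fin n`. -/
def dfsFrom {n : ℕ} (adj : Fin n → List (Fin n)) (r : Fin n) :
    List (Fin n × Option (Fin n)) :=
  dfsRun adj (n * n + n + 1) [(r, none)] []

/-- The neighbor list of `v`, explored in the order determined by the permutation `ρ`:
neighbors `w` are visited in increasing order of `ρ w`.  A uniformly random `ρ` induces
a uniformly random ordering of the neighbors of `v`. -/
noncomputable def nbrList {n : ℕ} (G : SimpleGraph (Fin n)) [DecidableRel G.Adj]
    (ρ : Equiv.Perm (Fin n)) (v : Fin n) : List (Fin n) :=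
  (((G.neighborFinset v).image ρ).sort (· ≤ ·)).map ρ.symm

/-- Sample space of the randomized DFS: a uniformly random root together with an
independent uniformly random permutation for each vertex. -/
abbrev Omega (n : ℕ) := Fin n × (Fin n → Equiv.Perm (Fin n))

/-- The list of `(vertex, parent)` discoveries of the randomized DFS at sample `ω`. -/
noncomputable def dfsResult {n : ℕ} (G : SimpleGraph (Fin n)) [DecidableRel G.Adj]
    (ω : Omega n) : List (Fin n × Option (Fin n)) :=
  dfsFrom (fun v => nbrList G (ω.2 v) v) ω.1

/-- The (multi)set of discovery edges of the DFS spanning tree at sample `ω`. -/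
noncomputable def dfsTreeEdges {n : ℕ} (G : SimpleGraph (Fin n)) [DecidableRel G.Adj]
    (ω : Omega n) : List (Sym2 (Fin n)) :=
  (dfsResult G ω).filterMap fun vp => vp.2.map fun u => s(u, vp.1)

/-- Uniform probability of an event on a finite sample space. -/
noncomputable def Pr {α : Type*} [Fintype α] (p : α → Prop) : ℝ :=
  ((Finset.univ.filter p).card : ℝ) / (Fintype.card α : ℝ)

section Aux
open List
variable {n : ℕ}

lemma dfsRun_zero (adj : Fin n → List (Fin n)) (s : List (Fin n × Option (Fin n)))
    (vis : List (Fin n)) : dfsRun adj 0 s vis = [] := rfl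
lemma dfsRun_nil (adj : Fin n → List (Fin n)) (fuel : ℕ) (vis : List (Fin n)) :
    dfsRun adj (fuel + 1) [] vis = [] := rfl
lemma dfsRun_cons (adj : Fin n → List (Fin n)) (fuel : ℕ) (v : Fin n) (p : Option (Fin n))
    (stack : List (Fin n × Option (Fin n))) (visited : List (Fin n)) :
    dfsRun adj (fuel + 1) ((v, p) :: stack) visited =
      if v ∈ visited then dfsRun adj fuel stack visited
      else (v, p) :: dfsRun adj fuel ((adj v).map (fun w => (w, some v)) ++ stack)
        (v :: visited) := rfl

def mu (adj : Fin n → List (Fin n)) (stack : List (Fin n × Option (Fin n)))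
    (visited : List (Fin n)) : ℕ :=
  stack.length + ∑ w ∈ Finset.univ.filter (fun w => w ∉ visited), (1 + (adj w).length)

lemma mu_discover (adj : Fin n → List (Fin n)) (v : Fin n) (q : Option (Fin n))
    (stack : List (Fin n × Option (Fin n))) (visited : List (Fin n)) (hv : v ∉ visited) :
    mu adj ((adj v).map (fun w => (w, some v)) ++ stack) (v :: visited) + 2 =
      mu adj ((v, q) :: stack) visited := by
  have hsplit : (Finset.univ.filter (fun w : Fin n => w ∉ visited)) =
      insert v (Finset.univ.filter (fun w : Fin n => w ∉ v :: visited)) := by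
    ext w
    by_cases hw : w = v
    · subst hw; simp [hv]
    · simp [hw, List.mem_cons]
  have hvmem : v ∉ Finset.univ.filter (fun w : Fin n => w ∉ v :: visited) := by simp
  rw [mu, mu, hsplit, Finset.sum_insert hvmem]
  simp only [List.length_append, List.length_map, List.length_cons]
  ring

lemma dfsRun_split (adj : Fin n → List (Fin n)) (x : Fin n) :
    ∀ (fuel : ℕ) (stack : List (Fin n × Option (Fin n))) (visited : List (Fin n)),
      x ∉ visited →
      x ∈ (dfsRun adj fuel stack visited).map Prod.fst →
      ∃ (pre : List (Fin n × Option (Fin n))) (p : Option (Fin n))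
        (stack' : List (Fin n × Option (Fin n))) (fuel' : ℕ),
        x ∉ pre.map Prod.fst ∧ fuel ≤ fuel' + mu adj stack visited ∧
        ∀ adj' : Fin n → List (Fin n), (∀ z, z ≠ x → adj' z = adj z) →
          dfsRun adj' fuel stack visited =
            pre ++ (x, p) :: dfsRun adj' fuel'
              ((adj' x).map (fun w => (w, some x)) ++ stack')
              (x :: ((pre.map Prod.fst).reverse ++ visited)) := by
  intro fuel
  induction fuel with
  | zero => intro stack visited _ h; simp [dfsRun_zero] at h
  | succ fuel IH =>
    rintro (_ | ⟨⟨v, q⟩, stack⟩) visited hxv hmem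
    · simp [dfsRun_nil] at hmem
    · by_cases hv : v ∈ visited
      · rw [dfsRun_cons, if_pos hv] at hmem
        obtain ⟨pre, p, stack', fuel', h1, h2, h3⟩ := IH stack visited hxv hmem
        refine ⟨pre, p, stack', fuel', h1, ?_, ?_⟩
        · have : mu adj ((v, q) :: stack) visited = mu adj stack visited + 1 := by
            simp [mu]; omega
          omega
        · intro adj' ha
          rw [dfsRun_cons, if_pos hv, h3 adj' ha]
      · by_cases hvx : v = x
        · subst hvx
          refine ⟨[], q, stack, fuel, by simp, ?_, ?_⟩
          · have : 1 ≤ mu adj ((v, q) :: stack) visited := by simp [mu]; omega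
            omega
          · intro adj' _
            rw [dfsRun_cons, if_neg hv]
            simp
        · rw [dfsRun_cons, if_neg hv] at hmem
          simp only [map_cons, mem_cons] at hmem
          have hmem' : x ∈ (dfsRun adj fuel ((adj v).map (fun w => (w, some v)) ++ stack)
              (v :: visited)).map Prod.fst := by
            rcases hmem with h | h
            · exact absurd h.symm hvx
            · exact h
          have hxv' : x ∉ v :: visited := by
            simp only [List.mem_cons, not_or]
            exact ⟨fun hh => hvx hh.symm, hxv⟩
          obtain ⟨pre, p, stack', fuel', h1, h2, h3⟩ := IH _ _ hxv' hmem'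
          refine ⟨(v, q) :: pre, p, stack', fuel', ?_, ?_, ?_⟩
          · simp only [map_cons, mem_cons, not_or]
            exact ⟨fun hh => hvx hh.symm, h1⟩
          · have hmu := mu_discover adj v q stack visited hv
            omega
          · intro adj' ha
            rw [dfsRun_cons, if_neg hv, ha v hvx, h3 adj' ha]
            simp [List.reverse_cons, List.append_assoc]

lemma dfsRun_closed (adj : Fin n → List (Fin n)) :
    ∀ (fuel : ℕ) (stack : List (Fin n × Option (Fin n))) (visited : List (Fin n)),
      mu adj stack visited ≤ fuel → ∀ b : Fin n,
      (b ∈ stack.map Prod.fst ∨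
        ∃ a ∈ (dfsRun adj fuel stack visited).map Prod.fst, b ∈ adj a) →
      b ∈ visited ∨ b ∈ (dfsRun adj fuel stack visited).map Prod.fst := by
  intro fuel
  induction fuel with
  | zero =>
    rintro (_ | ⟨⟨v, q⟩, stack⟩) visited hmu b hb
    · simp [dfsRun_zero] at hb
    · exfalso; simp [mu] at hmu
  | succ fuel IH =>
    rintro (_ | ⟨⟨v, q⟩, stack⟩) visited hmu b hb
    · simp [dfsRun_nil] at hb
    · by_cases hv : v ∈ visited
      · rw [dfsRun_cons, if_pos hv] at hb ⊢
        have hmu' : mu adj stack visited ≤ fuel := by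
          simp only [mu, List.length_cons] at hmu ⊢; omega
        rcases hb with hb | hb
        · simp only [map_cons, mem_cons] at hb
          rcases hb with rfl | hb
          · exact Or.inl hv
          · exact IH stack visited hmu' b (Or.inl hb)
        · exact IH stack visited hmu' b (Or.inr hb)
      · rw [dfsRun_cons, if_neg hv] at hb ⊢
        have hmu' : mu adj ((adj v).map (fun w => (w, some v)) ++ stack) (v :: visited) ≤ fuel := by
          have := mu_discover adj v q stack visited hv
          omega
        have key : b ∈ v :: visited ∨
            b ∈ (dfsRun adj fuel ((adj v).map (fun w => (w, some v)) ++ stack)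
              (v :: visited)).map Prod.fst →
            b ∈ visited ∨ b ∈ ((v, q) :: dfsRun adj fuel
              ((adj v).map (fun w => (w, some v)) ++ stack) (v :: visited)).map Prod.fst := by
          rintro (hb1 | hb1)
          · rcases List.mem_cons.1 hb1 with rfl | hb1
            · right; simp
            · exact Or.inl hb1
          · right; simp only [map_cons, mem_cons]; exact Or.inr hb1
        rcases hb with hb | hb
        · simp only [map_cons, mem_cons] at hb
          rcases hb with rfl | hb
          · right; simp
          · exact key (IH _ _ hmu' b (Or.inl (by simp [hb])))
        · obtain ⟨a, ha, hba⟩ := hb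
          simp only [map_cons, mem_cons] at ha
          rcases ha with rfl | ha
          · refine key (IH _ _ hmu' b (Or.inl ?_))
            simp only [List.map_append, List.map_map, mem_append]
            left
            simpa [Function.comp] using hba
          · exact key (IH _ _ hmu' b (Or.inr ⟨a, ha, hba⟩))
end Aux

section Aux2
open List
variable {n : ℕ} {G : SimpleGraph (Fin n)} [DecidableRel G.Adj]

lemma mem_nbrList {ρ : Equiv.Perm (Fin n)} {x w : Fin n} :
    w ∈ nbrList G ρ x ↔ G.Adj x w := by
  simp only [nbrList, List.mem_map, Finset.mem_sort, Finset.mem_image,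
    SimpleGraph.mem_neighborFinset]
  constructor
  · rintro ⟨z, ⟨a, ha, rfl⟩, hz⟩
    obtain rfl : a = w := by simpa using hz
    exact ha
  · intro h
    exact ⟨ρ w, ⟨w, h, rfl⟩, ρ.symm_apply_apply w⟩

lemma nbrList_nodup {ρ : Equiv.Perm (Fin n)} {x : Fin n} : (nbrList G ρ x).Nodup :=
  (Finset.sort_nodup _ _).map ρ.symm.injective

lemma nbrList_length {ρ : Equiv.Perm (Fin n)} {x : Fin n} :
    (nbrList G ρ x).length = G.degree x := by
  rw [nbrList, List.length_map, Finset.length_sort,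
    Finset.card_image_of_injective _ ρ.injective]
  rfl

lemma nbrList_sorted {ρ : Equiv.Perm (Fin n)} {x : Fin n} :
    (nbrList G ρ x).Pairwise (fun a b => ρ a ≤ ρ b) := by
  rw [nbrList, List.pairwise_map]
  exact List.Pairwise.imp (fun h => by simpa using h) (Finset.pairwise_sort _ (· ≤ ·))

lemma nbrList_perm (ρ ρ' : Equiv.Perm (Fin n)) (x : Fin n) :
    nbrList G ρ x ~ nbrList G ρ' x := by
  refine List.perm_of_nodup_nodup_toFinset_eq nbrList_nodup nbrList_nodup ?_
  ext w
  simp [List.mem_toFinset, mem_nbrList]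

lemma nbrList_eq_of_sorted {ρ : Equiv.Perm (Fin n)} {x : Fin n} {M : List (Fin n)}
    (hperm : M ~ nbrList G ρ x) (hs : M.Pairwise fun a b => ρ a ≤ ρ b) :
    M = nbrList G ρ x := by
  haveI : IsAntisymm (Fin n) (fun a b => ρ a ≤ ρ b) :=
    ⟨fun a b h1 h2 => ρ.injective (le_antisymm h1 h2)⟩
  exact List.Perm.eq_of_pairwise (fun a b _ _ h1 h2 => ρ.injective (le_antisymm h1 h2)) hs nbrList_sorted hperm

lemma map_formPerm_self {α : Type*} [DecidableEq α] (C : List α) (h : C.Nodup) :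
    C.map C.formPerm = C.rotate 1 := by
  apply List.ext_getElem
  · simp
  · intro i h1 h2
    rw [List.getElem_map, List.formPerm_apply_getElem _ h, List.getElem_rotate]

lemma list_decomp {α : Type*} [DecidableEq α] {L : List α} {y : α} (hy : y ∈ L)
    (hnd : L.Nodup) :
    L = L.take (L.idxOf y) ++ y :: L.drop (L.idxOf y + 1) ∧
    L.erase y = L.take (L.idxOf y) ++ L.drop (L.idxOf y + 1) ∧
    y ∉ L.take (L.idxOf y) ∧ y ∉ L.drop (L.idxOf y + 1) := by
  have hidx : L.idxOf y < L.length := List.idxOf_lt_length_iff.2 hy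
  have hdrop : L.drop (L.idxOf y) = y :: L.drop (L.idxOf y + 1) := by
    rw [List.drop_eq_getElem_cons hidx, List.getElem_idxOf hidx]
  have hL : L = L.take (L.idxOf y) ++ y :: L.drop (L.idxOf y + 1) := by
    conv_lhs => rw [← List.take_append_drop (L.idxOf y) L]
    rw [hdrop]
  have hnd' : (L.take (L.idxOf y) ++ y :: L.drop (L.idxOf y + 1)).Nodup := hL ▸ hnd
  obtain ⟨hA, hyB', hdisj⟩ := List.nodup_append.1 hnd'
  have hyB : y ∉ L.drop (L.idxOf y + 1) := (List.nodup_cons.1 hyB').1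
  have hyA : y ∉ L.take (L.idxOf y) := fun hyA => hdisj _ hyA _ List.mem_cons_self rfl
  refine ⟨hL, ?_, hyA, hyB⟩
  have : L.erase y = (L.take (L.idxOf y) ++ y :: L.drop (L.idxOf y + 1)).erase y := by
    rw [← hL]
  rw [this, List.erase_append_right _ hyA, List.erase_cons_head]

lemma nbrList_mul_formPerm {ρ : Equiv.Perm (Fin n)} {x y : Fin n}
    (hy : y ∈ nbrList G ρ x) :
    nbrList G (ρ * List.formPerm (y :: (nbrList G ρ x).take ((nbrList G ρ x).idxOf y))) x
      = y :: (nbrList G ρ x).erase y := by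
  set L := nbrList G ρ x with hLdef
  set k := L.idxOf y with hk
  obtain ⟨hL, hLerase, hyA, hyB⟩ := list_decomp hy (nbrList_nodup (G := G))
  set A := L.take k with hA
  set B := L.drop (k + 1) with hB
  set σ := List.formPerm (y :: A) with hσ
  have hndL : L.Nodup := nbrList_nodup
  have hndAyB : (A ++ y :: B).Nodup := hL ▸ hndL
  obtain ⟨hndA, hndyB, hdisj⟩ := List.nodup_append.1 hndAyB
  have hndyA : (y :: A).Nodup := List.nodup_cons.2 ⟨hyA, hndA⟩
  have hBfix : ∀ b ∈ B, σ b = b := by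
    intro b hb
    apply List.formPerm_apply_of_notMem
    intro hbmem
    rcases List.mem_cons.1 hbmem with rfl | hbA
    · exact hyB hb
    · exact hdisj _ hbA _ (List.mem_cons.2 (Or.inr hb)) rfl
  have hmapσ : (y :: (A ++ B)).map σ = L := by
    have h1 : (y :: A).map σ = A ++ [y] := by
      rw [hσ, map_formPerm_self _ hndyA, List.rotate_cons_succ, List.rotate_zero]
    have h2 : B.map σ = B := by
      rw [List.map_congr_left hBfix]; exact List.map_id _
    calc (y :: (A ++ B)).map σ = (y :: A).map σ ++ B.map σ := by simp
      _ = (A ++ [y]) ++ B := by rw [h1, h2]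
      _ = A ++ y :: B := by simp
      _ = L := hL.symm
  symm
  apply nbrList_eq_of_sorted
  · calc y :: L.erase y ~ L := (List.perm_cons_erase hy).symm
      _ ~ nbrList G (ρ * σ) x := nbrList_perm ρ (ρ * σ) x
  · have hmap : (y :: L.erase y).map (ρ * σ) = L.map ρ := by
      rw [hLerase]
      show (y :: (A ++ B)).map (⇑(ρ * σ)) = L.map ρ
      rw [Equiv.Perm.coe_mul, ← List.map_map, hmapσ]
    rw [← List.pairwise_map (f := ⇑(ρ * σ)), hmap, List.pairwise_map]
    exact nbrList_sorted
end Aux2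

section Main
open List
variable {n : ℕ} (G : SimpleGraph (Fin n)) [DecidableRel G.Adj]

/-- The list of discovered vertices, in discovery order. -/
noncomputable def rList (ω : Omega n) : List (Fin n) := (dfsResult G ω).map Prod.fst

lemma mu_init_le (ω : Omega n) (r : Fin n) :
    mu (fun w => nbrList G (ω.2 w) w) [(r, none)] [] ≤ n * n + 1 := by
  rw [mu]
  have hfilter : (Finset.univ.filter (fun w : Fin n => w ∉ ([] : List (Fin n)))) =
      Finset.univ := by
    apply Finset.filter_true_of_mem
    intro w _
    exact List.not_mem_nil
  rw [hfilter]
  have hbound : ∀ w : Fin n, 1 + (nbrList G (ω.2 w) w).length ≤ n := by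
    intro w
    rw [nbrList_length]
    have := G.degree_lt_card_verts w
    rw [Fintype.card_fin] at this
    omega
  calc 1 + ∑ w : Fin n, (1 + (nbrList G (ω.2 w) w).length)
      ≤ 1 + ∑ _w : Fin n, n :=
        Nat.add_le_add_left (Finset.sum_le_sum (fun w _ => hbound w)) 1
    _ = 1 + n * n := by rw [Finset.sum_const, Finset.card_univ, Fintype.card_fin, smul_eq_mul]
    _ ≤ n * n + 1 := by omega

lemma walk_mem {S : Fin n → Prop} (hcl : ∀ a b, S a → G.Adj a b → S b) :
    ∀ {a b : Fin n}, G.Walk a b → S a → S b := by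
  intro a b p
  induction p with
  | nil => exact id
  | cons h q ih => exact fun ha => ih (hcl _ _ ha h)

lemma mem_rList (hconn : G.Connected) (ω : Omega n) (w : Fin n) : w ∈ rList G ω := by
  have hres : rList G ω =
      (dfsRun (fun z => nbrList G (ω.2 z) z) (n * n + n + 1) [(ω.1, none)] []).map
        Prod.fst := rfl
  have hmu : mu (fun z => nbrList G (ω.2 z) z) [(ω.1, none)] [] ≤ n * n + n + 1 := by
    have := mu_init_le G ω ω.1
    omega
  have hroot : ω.1 ∈ rList G ω := by
    rw [hres, show (n * n + n + 1) = (n * n + n) + 1 from rfl, dfsRun_cons,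
      if_neg (List.not_mem_nil)]
    simp
  have hclosed : ∀ a b, a ∈ rList G ω → G.Adj a b → b ∈ rList G ω := by
    intro a b ha hab
    have hb := dfsRun_closed (fun z => nbrList G (ω.2 z) z) (n * n + n + 1)
      [(ω.1, none)] [] hmu b (Or.inr ⟨a, by rwa [hres] at ha, mem_nbrList.2 hab⟩)
    rcases hb with hb | hb
    · exact absurd hb List.not_mem_nil
    · rwa [hres]
  obtain ⟨pwalk⟩ := hconn.preconnected ω.1 w
  exact walk_mem G hclosed pwalk hroot

/-- The first endpoint of `{u, v}` discovered by the DFS. -/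
noncomputable def xEP (u v : Fin n) (ω : Omega n) : Fin n :=
  if (rList G ω).idxOf u ≤ (rList G ω).idxOf v then u else v

/-- The other endpoint. -/
noncomputable def yEP (u v : Fin n) (ω : Omega n) : Fin n :=
  if (rList G ω).idxOf u ≤ (rList G ω).idxOf v then v else u

/-- Position of `y` in the neighbor ordering of `x`. -/
noncomputable def idxF (u v : Fin n) (ω : Omega n) : ℕ :=
  (nbrList G (ω.2 (xEP G u v ω)) (xEP G u v ω)).idxOf (yEP G u v ω)

/-- The sample obtained by rotating `y` to the front of `x`'s neighbor ordering. -/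
noncomputable def Fmap (u v : Fin n) (ω : Omega n) : Omega n :=
  (ω.1, Function.update ω.2 (xEP G u v ω)
    (ω.2 (xEP G u v ω) *
      List.formPerm (yEP G u v ω ::
        (nbrList G (ω.2 (xEP G u v ω)) (xEP G u v ω)).take (idxF G u v ω))))

/-- Reconstruction of the original sample from the modified one and the position. -/
noncomputable def recov (u v : Fin n) (q : Omega n × ℕ) : Omega n :=
  (q.1.1, Function.update q.1.2 (xEP G u v q.1)
    (q.1.2 (xEP G u v q.1) *
      (List.formPerm (yEP G u v q.1 ::
        ((nbrList G (q.1.2 (xEP G u v q.1)) (xEP G u v q.1)).tail.take q.2)))⁻¹))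

lemma xEP_cases (u v : Fin n) (ω : Omega n) :
    (xEP G u v ω = u ∧ yEP G u v ω = v) ∨ (xEP G u v ω = v ∧ yEP G u v ω = u) := by
  unfold xEP yEP
  split
  · exact Or.inl ⟨rfl, rfl⟩
  · exact Or.inr ⟨rfl, rfl⟩

lemma xEP_adj {u v : Fin n} (huv : G.Adj u v) (ω : Omega n) :
    G.Adj (xEP G u v ω) (yEP G u v ω) := by
  rcases xEP_cases G u v ω with ⟨hx, hy⟩ | ⟨hx, hy⟩ <;> rw [hx, hy]
  · exact huv
  · exact huv.symm

lemma xEP_le (u v : Fin n) (ω : Omega n) :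
    (rList G ω).idxOf (xEP G u v ω) ≤ (rList G ω).idxOf (yEP G u v ω) := by
  unfold xEP yEP
  split
  · assumption
  · next h => exact le_of_not_ge h

lemma key_facts (hconn : G.Connected) {u v : Fin n} (huv : G.Adj u v) (ω : Omega n) :
    s(u, v) ∈ dfsTreeEdges G (Fmap G u v ω) ∧
    xEP G u v (Fmap G u v ω) = xEP G u v ω ∧
    yEP G u v (Fmap G u v ω) = yEP G u v ω := by
  classical
  set x := xEP G u v ω with hx
  set y := yEP G u v ω with hy
  set adj : Fin n → List (Fin n) := fun w => nbrList G (ω.2 w) w with hadjdef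
  have hres : dfsResult G ω = dfsRun adj (n * n + n + 1) [(ω.1, none)] [] := rfl
  have hxy : G.Adj x y := xEP_adj G huv ω
  have hxney : x ≠ y := hxy.ne
  have hixy : (rList G ω).idxOf x ≤ (rList G ω).idxOf y := xEP_le G u v ω
  have hxmem : x ∈ (dfsRun adj (n * n + n + 1) [(ω.1, none)] []).map Prod.fst := by
    have := mem_rList G hconn ω x
    rw [rList, hres] at this
    exact this
  obtain ⟨pre, p, stack', fuel', hxpre, hfuel, heq⟩ :=
    dfsRun_split adj x (n * n + n + 1) [(ω.1, none)] [] List.not_mem_nil hxmem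
  have h1 : dfsResult G ω = pre ++ (x, p) :: dfsRun adj fuel'
      ((adj x).map (fun w => (w, some x)) ++ stack')
      (x :: ((pre.map Prod.fst).reverse ++ [])) := by
    rw [hres]; exact heq adj (fun _ _ => rfl)
  have hidxx : (rList G ω).idxOf x = pre.length := by
    rw [rList, h1, List.map_append, List.idxOf_append_of_notMem hxpre, List.map_cons,
      List.idxOf_cons_self, List.length_map]
    omega
  have hypre : y ∉ pre.map Prod.fst := by
    intro hymem
    have hlt : (rList G ω).idxOf y < pre.length := by
      rw [rList, h1, List.map_append, List.idxOf_append_of_mem hymem]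
      have := List.idxOf_lt_length_iff.2 hymem
      rwa [List.length_map] at this
    omega
  have hn : 0 < n := x.pos
  have hmu : mu adj [(ω.1, none)] [] ≤ n * n + 1 := mu_init_le G ω ω.1
  have hfuel1 : 1 ≤ fuel' := by
    set M := n * n with hM
    omega
  obtain ⟨f0, rfl⟩ : ∃ f0, fuel' = f0 + 1 := ⟨fuel' - 1, by omega⟩
  set ρ := ω.2 x with hρ
  set σ := List.formPerm (y :: (nbrList G ρ x).take ((nbrList G ρ x).idxOf y)) with hσ
  have hFdef : Fmap G u v ω = (ω.1, Function.update ω.2 x (ρ * σ)) := rfl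
  set adj2 : Fin n → List (Fin n) := fun w => nbrList G ((Fmap G u v ω).2 w) w with hadj2
  have hres2 : dfsResult G (Fmap G u v ω) = dfsRun adj2 (n * n + n + 1) [(ω.1, none)] [] := rfl
  have hagree : ∀ z, z ≠ x → adj2 z = adj z := by
    intro z hz
    simp only [hadj2, hadjdef, hFdef, Function.update_of_ne hz]
  have hyL : y ∈ nbrList G ρ x := mem_nbrList.2 hxy
  have hadj2x : adj2 x = y :: (nbrList G ρ x).erase y := by
    simp only [hadj2, hFdef, Function.update_self]
    exact nbrList_mul_formPerm hyL
  have h2 : dfsResult G (Fmap G u v ω) =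
      pre ++ (x, p) :: dfsRun adj2 (f0 + 1)
        ((y :: (nbrList G ρ x).erase y).map (fun w => (w, some x)) ++ stack')
        (x :: ((pre.map Prod.fst).reverse ++ [])) := by
    rw [hres2, heq adj2 hagree, hadj2x]
  have hynotvis : y ∉ x :: ((pre.map Prod.fst).reverse ++ ([] : List (Fin n))) := by
    simp only [List.mem_cons, List.mem_append, List.mem_reverse, List.not_mem_nil,
      or_false, not_or]
    exact ⟨fun h => hxney h.symm, hypre⟩
  have h3 : dfsResult G (Fmap G u v ω) =
      pre ++ (x, p) :: (y, some x) ::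
        dfsRun adj2 f0 ((adj2 y).map (fun w => (w, some y)) ++
          (((nbrList G ρ x).erase y).map (fun w => (w, some x)) ++ stack'))
        (y :: x :: ((pre.map Prod.fst).reverse ++ [])) := by
    rw [h2, List.map_cons, List.cons_append, dfsRun_cons, if_neg hynotvis]
  have hedge : s(u, v) ∈ dfsTreeEdges G (Fmap G u v ω) := by
    rw [dfsTreeEdges]
    apply List.mem_filterMap.2
    refine ⟨(y, some x), ?_, ?_⟩
    · rw [h3]; simp
    · show some s(x, y) = some s(u, v)
      rcases xEP_cases G u v ω with ⟨hxu, hyv⟩ | ⟨hxv, hyu⟩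
      · rw [← hx, ← hy] at *
        rw [hxu, hyv]
      · rw [← hx, ← hy] at *
        rw [hxv, hyu, Sym2.eq_swap]
  have hidxx2 : (rList G (Fmap G u v ω)).idxOf x = pre.length := by
    rw [rList, h3, List.map_append, List.idxOf_append_of_notMem hxpre, List.map_cons,
      List.idxOf_cons_self, List.length_map]
    omega
  have hidxy2 : (rList G (Fmap G u v ω)).idxOf y = pre.length + 1 := by
    rw [rList, h3, List.map_append, List.idxOf_append_of_notMem hypre, List.map_cons,
      List.idxOf_cons_ne _ hxney, List.map_cons,
      List.idxOf_cons_self, List.length_map]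
  refine ⟨hedge, ?_, ?_⟩
  · show xEP G u v (Fmap G u v ω) = x
    rcases xEP_cases G u v ω with ⟨hxu, hyv⟩ | ⟨hxv, hyu⟩
    · have hxu' : x = u := hx.trans hxu
      have hyv' : y = v := hy.trans hyv
      rw [hxu'] at hidxx2
      rw [hyv'] at hidxy2
      unfold xEP
      rw [if_pos]
      · exact hxu'.symm
      · rw [hidxx2, hidxy2]; omega
    · have hxv' : x = v := hx.trans hxv
      have hyu' : y = u := hy.trans hyu
      rw [hxv'] at hidxx2
      rw [hyu'] at hidxy2
      unfold xEP
      rw [if_neg]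
      · exact hxv'.symm
      · rw [hidxx2, hidxy2]; omega
  · show yEP G u v (Fmap G u v ω) = y
    rcases xEP_cases G u v ω with ⟨hxu, hyv⟩ | ⟨hxv, hyu⟩
    · have hxu' : x = u := hx.trans hxu
      have hyv' : y = v := hy.trans hyv
      rw [hxu'] at hidxx2
      rw [hyv'] at hidxy2
      unfold yEP
      rw [if_pos]
      · exact hyv'.symm
      · rw [hidxx2, hidxy2]; omega
    · have hxv' : x = v := hx.trans hxv
      have hyu' : y = u := hy.trans hyu
      rw [hxv'] at hidxx2
      rw [hyu'] at hidxy2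
      unfold yEP
      rw [if_neg]
      · exact hyu'.symm
      · rw [hidxx2, hidxy2]; omega

lemma recov_Fmap (hconn : G.Connected) {u v : Fin n} (huv : G.Adj u v) (ω : Omega n) :
    recov G u v (Fmap G u v ω, idxF G u v ω) = ω := by
  obtain ⟨-, hx2, hy2⟩ := key_facts G hconn huv ω
  set x := xEP G u v ω with hx
  set y := yEP G u v ω with hy
  set ρ := ω.2 x with hρ
  set L := nbrList G ρ x with hL
  set k := idxF G u v ω with hk
  have hxy : G.Adj x y := xEP_adj G huv ω
  have hyL : y ∈ L := mem_nbrList.2 hxy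
  have hkk : k = L.idxOf y := rfl
  obtain ⟨hdecomp, hLerase, hyA, hyB⟩ := list_decomp hyL (nbrList_nodup (G := G))
  rw [← hkk] at hLerase
  have hFx : (Fmap G u v ω).2 x = ρ * List.formPerm (y :: L.take k) := by
    show Function.update ω.2 x _ x = _
    rw [Function.update_self]
  have hnbrF : nbrList G ((Fmap G u v ω).2 x) x = y :: L.erase y := by
    rw [hFx, hkk]
    exact nbrList_mul_formPerm hyL
  have hidxlt : k < L.length := hkk ▸ List.idxOf_lt_length_iff.2 hyL
  have hAlen : (L.take k).length = k := by
    rw [List.length_take]; omega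
  have htake : (L.erase y).take k = L.take k := by
    rw [hLerase]
    exact List.take_left' hAlen
  have hFfst : (Fmap G u v ω).1 = ω.1 := rfl
  have hFsnd : (Fmap G u v ω).2 = Function.update ω.2 x (ρ * List.formPerm (y :: L.take k)) :=
    rfl
  unfold recov
  simp only [hx2, hy2]
  rw [hnbrF, List.tail_cons, htake, hFx, mul_inv_cancel_right, hFfst, hFsnd,
    Function.update_idem, hρ, Function.update_eq_self]

end Main

theorem dfs_edge_in_tree_prob_ge {n : ℕ} (G : SimpleGraph (Fin n)) [DecidableRel G.Adj]
    (hconn : G.Connected) (u v : Fin n) (huv : G.Adj u v) :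
    (1 : ℝ) / (max (G.degree u) (G.degree v) : ℕ) ≤
        Pr (fun ω : Omega n => s(u, v) ∈ dfsTreeEdges G ω) ∧
      (1 : ℝ) / ((Finset.univ.sup fun w => G.degree w : ℕ) : ℝ) ≤
        Pr (fun ω : Omega n => s(u, v) ∈ dfsTreeEdges G ω) := by
  have hn : 0 < n := u.pos
  set m : ℕ := max (G.degree u) (G.degree v) with hm
  have hm1 : 1 ≤ m := by
    have h0 : 0 < G.degree u := (G.degree_pos_iff_exists_adj u).2 ⟨v, huv⟩
    exact le_trans h0 (le_max_left _ _)
  have hidxlt : ∀ ω : Omega n, idxF G u v ω < m := by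
    intro ω
    have hxy := xEP_adj G huv ω
    have h1 : idxF G u v ω < (nbrList G (ω.2 (xEP G u v ω)) (xEP G u v ω)).length :=
      List.idxOf_lt_length_iff.2 (mem_nbrList.2 hxy)
    rw [nbrList_length] at h1
    have h2 : G.degree (xEP G u v ω) ≤ m := by
      rcases xEP_cases G u v ω with ⟨hx, -⟩ | ⟨hx, -⟩ <;> rw [hx]
      · exact le_max_left _ _
      · exact le_max_right _ _
    omega
  have hΩ : 0 < Fintype.card (Omega n) := Fintype.card_pos_iff.2 ⟨(u, fun _ => 1)⟩
  have hPr : (1 : ℝ) / (m : ℝ) ≤ Pr (fun ω : Omega n => s(u, v) ∈ dfsTreeEdges G ω) := by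
    unfold Pr
    rw [div_le_div_iff₀ (by exact_mod_cast hm1) (by exact_mod_cast hΩ), one_mul]
    rw [Finset.filter_congr_decidable]
    have hcard : Fintype.card (Omega n) ≤
        (Finset.univ.filter (fun ω : Omega n => s(u, v) ∈ dfsTreeEdges G ω)).card * m := by
      have hmaps : ∀ ω ∈ (Finset.univ : Finset (Omega n)),
          (Fmap G u v ω, idxF G u v ω) ∈
            (Finset.univ.filter (fun ω : Omega n => s(u, v) ∈ dfsTreeEdges G ω)) ×ˢ
              Finset.range m := fun ω _ =>
        Finset.mem_product.2 ⟨Finset.mem_filter.2 ⟨Finset.mem_univ _,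
          (key_facts G hconn huv ω).1⟩, Finset.mem_range.2 (hidxlt ω)⟩
      have hinj : Set.InjOn (fun ω : Omega n => (Fmap G u v ω, idxF G u v ω))
          (Finset.univ : Finset (Omega n)) := by
        intro a _ b _ hab
        have h := congrArg (recov G u v) hab
        rwa [recov_Fmap G hconn huv a, recov_Fmap G hconn huv b] at h
      calc Fintype.card (Omega n) = (Finset.univ : Finset (Omega n)).card :=
          Finset.card_univ.symm
        _ ≤ ((Finset.univ.filter (fun ω : Omega n => s(u, v) ∈ dfsTreeEdges G ω)) ×ˢ
              Finset.range m).card := Finset.card_le_card_of_injOn _ hmaps hinj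
        _ = _ := by rw [Finset.card_product, Finset.card_range]
    exact_mod_cast hcard
  constructor
  · exact hPr
  · have hmd : m ≤ Finset.univ.sup (fun w => G.degree w) :=
      max_le (Finset.le_sup (f := fun w => G.degree w) (Finset.mem_univ u))
        (Finset.le_sup (f := fun w => G.degree w) (Finset.mem_univ v))
    refine le_trans ?_ hPr
    apply one_div_le_one_div_of_le
    · exact_mod_cast hm1
    · exact_mod_cast hmd

end RSNN
end

section
/- The WWL refinement is monotone in the maximum walk length: for ℓ ≤ ℓ' and any round t, the coloring π^(t) produced by WWL^ℓ is refined by the coloring produced by WWL^{ℓ'}; that is, any two vertices distinguished by WWL^ℓ at round t are also distinguished by WWL^{ℓ'} at round t. -/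
open scoped Classical

namespace RSNN

/-- The type of (free, injectively-hashed) WWL colors after `t` rounds, starting from
initial colors in `σ`: round `t+1` pairs the previous color with a multiset of colored
walk sequences.  Using the free pairing construction is equivalent to any injective
`Hash`. -/
def ColorType (σ : Type) : ℕ → Type
  | 0 => σ
  | t + 1 => ColorType σ t × Multiset (List (ColorType σ t))

variable {V : Type} [Fintype V] [DecidableEq V]

/-- The multiset of `c`-colored vertex sequences `(c w₀, …, c w_L)` over all walks
`(w₀, …, w_L)` in `G` of length `1 ≤ L ≤ ℓ` terminating at `u`. -/
noncomputable def walkColors (G : SimpleGraph V) [DecidableRel G.Adj] {σ : Type} {t : ℕ}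
    (ℓ : ℕ) (c : V → ColorType σ t) (u : V) : Multiset (List (ColorType σ t)) :=
  ∑ L ∈ Finset.Icc 1 ℓ, ∑ w0 : V,
    (G.finsetWalkLength L w0 u).val.map fun p => p.support.map c

/-- The Walk Weisfeiler–Lehman refinement `WWL^ℓ`: round `t+1` (injectively) hashes
the current color of `u` together with the multiset of colored walk sequences of all
walks of length `1 … ℓ` terminating at `u`. -/
noncomputable def WWL (G : SimpleGraph V) [DecidableRel G.Adj] {σ : Type}
    (ℓ : ℕ) (π0 : V → σ) : (t : ℕ) → V → ColorType σ t
  | 0 => π0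
  | t + 1 => fun u => (WWL G ℓ π0 t u, walkColors G ℓ (WWL G ℓ π0 t) u)

/-- Truncation of a `WWL^{ℓ'}` color to a `WWL^ℓ` color: recursively discard the
walk sequences coming from walks of length `> ℓ`. -/
noncomputable def trunc {σ : Type} (ℓ : ℕ) : (t : ℕ) → ColorType σ t → ColorType σ t
  | 0, c => c
  | t + 1, c =>
    let c' : ColorType σ t × Multiset (List (ColorType σ t)) := c
    ((trunc ℓ t c'.1,
      (c'.2.filter (fun p => p.length ≤ ℓ + 1)).map (List.map (trunc ℓ t))) :
        ColorType σ t × Multiset (List (ColorType σ t)))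

/-- Filtering-then-mapping multisets of lists, as an additive monoid hom. -/
noncomputable def filterMapHom {X Y : Type} (P : List X → Prop) [DecidablePred P]
    (g : List X → List Y) : Multiset (List X) →+ Multiset (List Y) where
  toFun m := (m.filter P).map g
  map_zero' := rfl
  map_add' a b := by simp only [Multiset.filter_add, Multiset.map_add]

theorem walkColors_trunc (G : SimpleGraph V) [DecidableRel G.Adj] {σ : Type} {t : ℕ}
    {ℓ ℓ' : ℕ} (hll' : ℓ ≤ ℓ') (c : V → ColorType σ t) (u : V) :
    ((walkColors G ℓ' c u).filter (fun p => p.length ≤ ℓ + 1)).map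
        (List.map (trunc ℓ t)) =
      walkColors G ℓ (fun x => trunc ℓ t (c x)) u := by
  classical
  have key : ∀ L w0, (filterMapHom (fun p => p.length ≤ ℓ + 1) (List.map (trunc ℓ t)))
      ((G.finsetWalkLength L w0 u).val.map fun p => p.support.map c) =
      if L ≤ ℓ then
        ((G.finsetWalkLength L w0 u).val.map
          fun p => p.support.map (fun x => trunc ℓ t (c x)))
      else 0 := by
    intro L w0
    show ((((G.finsetWalkLength L w0 u).val.map fun p => p.support.map c).filter
        (fun p => p.length ≤ ℓ + 1)).map (List.map (trunc ℓ t))) = _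
    by_cases hLl : L ≤ ℓ
    · rw [if_pos hLl, Multiset.filter_eq_self.mpr, Multiset.map_map]
      · exact Multiset.map_congr rfl fun p _ => by
          simp [Function.comp, List.map_map]
      · intro q hq
        obtain ⟨p, hp, rfl⟩ := Multiset.mem_map.mp hq
        have hlen : p.length = L := SimpleGraph.mem_finsetWalkLength_iff.mp hp
        simp only [List.length_map, SimpleGraph.Walk.length_support, hlen]
        omega
    · rw [if_neg hLl, Multiset.filter_eq_nil.mpr, Multiset.map_zero]
      intro q hq
      obtain ⟨p, hp, rfl⟩ := Multiset.mem_map.mp hq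
      have hlen : p.length = L := SimpleGraph.mem_finsetWalkLength_iff.mp hp
      simp only [List.length_map, SimpleGraph.Walk.length_support, hlen]
      omega
  show (filterMapHom (fun p => p.length ≤ ℓ + 1) (List.map (trunc ℓ t)))
      (walkColors G ℓ' c u) = _
  unfold walkColors
  rw [map_sum]
  simp only [map_sum, key]
  rw [← Finset.sum_subset (Finset.Icc_subset_Icc_right hll')]
  · refine Finset.sum_congr rfl fun L hL => Finset.sum_congr rfl fun w0 _ => ?_
    rw [Finset.mem_Icc] at hL
    rw [if_pos hL.2]
  · intro L hL' hL
    rw [Finset.mem_Icc] at hL hL'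
    refine Finset.sum_eq_zero fun w0 _ => ?_
    rw [if_neg (by omega)]

theorem WWL_trunc (G : SimpleGraph V) [DecidableRel G.Adj] {σ : Type}
    {ℓ ℓ' : ℕ} (hll' : ℓ ≤ ℓ') (π0 : V → σ) :
    ∀ t u, trunc ℓ t (WWL G ℓ' π0 t u) = WWL G ℓ π0 t u := by
  intro t
  induction t with
  | zero => intro u; rfl
  | succ t ih =>
    intro u
    have hfun : (fun x => trunc ℓ t (WWL G ℓ' π0 t x)) = WWL G ℓ π0 t := funext ih
    show (trunc ℓ t (WWL G ℓ' π0 t u),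
        ((walkColors G ℓ' (WWL G ℓ' π0 t) u).filter (fun p => p.length ≤ ℓ + 1)).map
          (List.map (trunc ℓ t))) = _
    rw [walkColors_trunc G hll', hfun, ih]
    rfl

/-- `WWL` is monotone in the maximum walk length: for `ℓ ≤ ℓ'` and
any round `t`, vertices distinguished by `WWL^ℓ` at round `t` are also distinguished
by `WWL^{ℓ'}` at round `t` (equivalently, equal `WWL^{ℓ'}` colors imply equal
`WWL^ℓ` colors). -/
theorem WWL_monotone_length (G : SimpleGraph V) [DecidableRel G.Adj] {σ : Type}
    {ℓ ℓ' : ℕ} (hll' : ℓ ≤ ℓ') (π0 : V → σ) (t : ℕ) (u v : V)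
    (h : WWL G ℓ' π0 t u = WWL G ℓ' π0 t v) :
    WWL G ℓ π0 t u = WWL G ℓ π0 t v := by
  rw [← WWL_trunc G hll' π0 t u, ← WWL_trunc G hll' π0 t v, h]

end RSNN
end

section
/- For every ℓ ≥ 1, the stable coloring of WWL^ℓ (walk-based Weisfeiler–Lehman with walks of length up to ℓ) has exactly the same distinguishing power as the stable coloring of classical 1-WL: two vertices (or two graphs, via color multisets) are distinguished by the stabilized WWL^ℓ if and only if they are distinguished by stabilized 1-WL. -/
open scoped Classical

namespace RSNN

variable {V : Type} [Fintype V] [DecidableEq V]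

/-- The type of (free, injectively-hashed) 1-WL colors after `t` rounds. -/
def WLColorType (σ : Type) : ℕ → Type
  | 0 => σ
  | t + 1 => WLColorType σ t × Multiset (WLColorType σ t)

/-- The 1-dimensional Weisfeiler–Lehman color refinement: round `t+1` (injectively)
hashes the current color of `u` with the multiset of its neighbors' colors. -/
noncomputable def WL {V : Type} [Fintype V] [DecidableEq V]
    (G : SimpleGraph V) [DecidableRel G.Adj] {σ : Type} (π0 : V → σ) :
    (t : ℕ) → V → WLColorType σ t
  | 0 => π0
  | t + 1 => fun u => (WL G π0 t u, (G.neighborFinset u).val.map (WL G π0 t))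

/-! ### auxiliary machinery -/

/-- iterated first projection -/
def wlProj {σ : Type} : (k : ℕ) → {m : ℕ} → WLColorType σ (m + k) → WLColorType σ m
  | 0, _, c => c
  | k+1, _, c => wlProj k c.1

lemma wlProj_WL {σ : Type} (G : SimpleGraph V) [DecidableRel G.Adj] (π0 : V → σ)
    (k m : ℕ) (u : V) : wlProj k (WL G π0 (m + k) u) = WL G π0 m u := by
  induction k with
  | zero => rfl
  | succ k ih => exact ih

lemma wl_cast {σ : Type} (G : SimpleGraph V) [DecidableRel G.Adj] (π0 : V → σ)
    {n n' : ℕ} (h : n = n') (u : V) :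
    cast (congrArg (WLColorType σ) h) (WL G π0 n u) = WL G π0 n' u := by
  subst h; rfl

/-- projection along an inequality -/
def wlProj' {σ : Type} {a b : ℕ} (_h : a ≤ b) (c : WLColorType σ b) : WLColorType σ a :=
  wlProj (b - a) (cast (congrArg (WLColorType σ) (by omega : b = a + (b - a))) c)

lemma wlProj'_WL {σ : Type} (G : SimpleGraph V) [DecidableRel G.Adj] (π0 : V → σ)
    {a b : ℕ} (h : a ≤ b) (u : V) : wlProj' h (WL G π0 b u) = WL G π0 a u := by
  unfold wlProj'
  rw [wl_cast, wlProj_WL]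
  omega

lemma map_finsetSum {α β γ : Type*} (s : Finset γ) (f : γ → Multiset α) (g : α → β) :
    (∑ x ∈ s, f x).map g = ∑ x ∈ s, (f x).map g := by
  induction s using Finset.cons_induction with
  | empty => simp
  | cons a s ha ih => simp [Finset.sum_insert ha, Multiset.map_add, ih]

lemma bind_val {α β : Type*} (s : Finset α) (g : α → Multiset β) :
    s.val.bind g = ∑ x ∈ s, g x := rfl

/-- walks of length `L` starting at `u`, colored supports -/
noncomputable def Aw (G : SimpleGraph V) [DecidableRel G.Adj] {α : Type} (c : V → α)
    (L : ℕ) (u : V) : Multiset (List α) :=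
  ∑ v : V, (G.finsetWalkLength L u v).val.map fun p => p.support.map c

lemma Aw_zero (G : SimpleGraph V) [DecidableRel G.Adj] {α : Type} (c : V → α) (u : V) :
    Aw G c 0 u = {[c u]} := by
  unfold Aw
  rw [Finset.sum_eq_single u]
  · have : G.finsetWalkLength 0 u u = {SimpleGraph.Walk.nil} := by
      ext p
      simp [SimpleGraph.mem_finsetWalkLength_iff, SimpleGraph.Walk.length_eq_zero_iff]
    simp [this]
  · intro v _ hvu
    have : G.finsetWalkLength 0 u v = ∅ := by
      ext p
      simp only [SimpleGraph.mem_finsetWalkLength_iff, Finset.notMem_empty, iff_false]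
      intro hp
      exact hvu.symm ((SimpleGraph.Walk.eq_of_length_eq_zero hp))
    simp [this]
  · simp

lemma fwl_succ_val (G : SimpleGraph V) [DecidableRel G.Adj] (L : ℕ) (u w : V) :
    (G.finsetWalkLength (L + 1) u w).val =
      (Finset.univ : Finset (G.neighborSet u)).val.bind fun x =>
        (G.finsetWalkLength L x w).val.map fun p => SimpleGraph.Walk.cons x.2 p := by
  have hdisj : (↑(Finset.univ : Finset (G.neighborSet u)) :
      Set (G.neighborSet u)).PairwiseDisjoint fun (x : G.neighborSet u) =>
        (G.finsetWalkLength L x w).map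
          ⟨fun p => SimpleGraph.Walk.cons x.2 p, fun _ _ h => by cases h; rfl⟩ := by
    intro x _ y _ hxy
    simp only [Finset.disjoint_left, Finset.mem_map, Function.Embedding.coeFn_mk]
    rintro p ⟨p1, _, rfl⟩ ⟨p2, _, h⟩
    injection h with h0 h1
    exact hxy (Subtype.ext h1.symm)
  have : G.finsetWalkLength (L + 1) u w =
      Finset.univ.disjiUnion (fun (x : G.neighborSet u) =>
        (G.finsetWalkLength L x w).map
          ⟨fun p => SimpleGraph.Walk.cons x.2 p, fun _ _ h => by cases h; rfl⟩) hdisj := by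
    rw [Finset.disjiUnion_eq_biUnion]
    rfl
  rw [this, Finset.disjiUnion_val]
  rfl

lemma Aw_succ (G : SimpleGraph V) [DecidableRel G.Adj] {α : Type} (c : V → α)
    (L : ℕ) (u : V) :
    Aw G c (L + 1) u = ∑ v ∈ G.neighborFinset u, (Aw G c L v).map (c u :: ·) := by
  unfold Aw
  have step : ∀ w : V,
      (G.finsetWalkLength (L+1) u w).val.map (fun p => p.support.map c) =
      ∑ x : G.neighborSet u,
        (G.finsetWalkLength L x w).val.map (fun p => c u :: p.support.map c) := by
    intro w
    rw [fwl_succ_val, Multiset.map_bind, bind_val]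
    apply Finset.sum_congr rfl
    intro x _
    rw [Multiset.map_map]
    rfl
  calc (∑ w : V, (G.finsetWalkLength (L+1) u w).val.map fun p => p.support.map c)
      = ∑ w : V, ∑ x : G.neighborSet u,
          (G.finsetWalkLength L x w).val.map (fun p => c u :: p.support.map c) := by
        exact Finset.sum_congr rfl fun w _ => step w
    _ = ∑ x : G.neighborSet u, ∑ w : V,
          (G.finsetWalkLength L x w).val.map (fun p => c u :: p.support.map c) :=
        Finset.sum_comm
    _ = ∑ x : G.neighborSet u,
          (∑ w : V, (G.finsetWalkLength L x w).val.map fun p => p.support.map c).map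
            (c u :: ·) := by
        apply Finset.sum_congr rfl
        intro x _
        rw [map_finsetSum]
        apply Finset.sum_congr rfl
        intro w _
        rw [Multiset.map_map]
        rfl
    _ = ∑ v ∈ G.neighborFinset u, (∑ w : V,
          (G.finsetWalkLength L v w).val.map fun p => p.support.map c).map (c u :: ·) := by
        have := Finset.sum_set_coe (s := G.neighborSet u)
          (f := fun v => (∑ w : V,
            (G.finsetWalkLength L v w).val.map fun p => p.support.map c).map (c u :: ·))
        exact this.trans (by rw [SimpleGraph.neighborFinset_def])

lemma Aw_comp (G : SimpleGraph V) [DecidableRel G.Adj] {α β : Type} (c : V → α) (g : α → β)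
    (L : ℕ) (u : V) : Aw G (fun v => g (c v)) L u = (Aw G c L u).map (List.map g) := by
  unfold Aw
  rw [map_finsetSum]
  apply Finset.sum_congr rfl
  intro w _
  rw [Multiset.map_map]
  exact Multiset.map_congr rfl fun p _ => by simp [List.map_map, Function.comp_def]

lemma fwl_reverse (G : SimpleGraph V) [DecidableRel G.Adj] (L : ℕ) (u w : V) :
    G.finsetWalkLength L w u =
      (G.finsetWalkLength L u w).map
        ⟨(SimpleGraph.Walk.reverse : G.Walk u w → _), SimpleGraph.Walk.reverse_injective⟩ := by
  ext p
  simp only [SimpleGraph.mem_finsetWalkLength_iff, Finset.mem_map,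
    Function.Embedding.coeFn_mk]
  constructor
  · intro hp
    exact ⟨p.reverse, by simp [hp], by simp⟩
  · rintro ⟨q, hq, rfl⟩
    simp [hq]

/-- reversal: colored supports of walks terminating at `u` are the reversals of colored
supports of walks starting at `u`. -/
lemma rev_sum (G : SimpleGraph V) [DecidableRel G.Adj] {α : Type} (c : V → α)
    (L : ℕ) (u : V) :
    (∑ w0 : V, (G.finsetWalkLength L w0 u).val.map fun p => p.support.map c) =
      (Aw G c L u).map List.reverse := by
  unfold Aw
  rw [map_finsetSum]
  apply Finset.sum_congr rfl
  intro w _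
  rw [fwl_reverse G L u w, Finset.map_val, Multiset.map_map, Multiset.map_map]
  apply Multiset.map_congr rfl
  intro p _
  simp [SimpleGraph.Walk.support_reverse]

/-- `phi s L` reconstructs, from the WL color at round `s + L`, the multiset of colored
supports (at round `s`) of all walks of length `L` starting at the vertex. -/
noncomputable def phi (σ : Type) (s : ℕ) :
    (L : ℕ) → WLColorType σ (s + L) → Multiset (List (WLColorType σ s))
  | 0, c => {[c]}
  | L+1, c => c.2.bind fun d => (phi σ s L d).map (fun l => wlProj (L+1) c :: l)

lemma phi_WL {σ : Type} (G : SimpleGraph V) [DecidableRel G.Adj] (π0 : V → σ)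
    (s : ℕ) : ∀ (L : ℕ) (u : V),
    phi σ s L (WL G π0 (s + L) u) = Aw G (WL G π0 s) L u := by
  intro L
  induction L with
  | zero =>
    intro u
    rw [Aw_zero]
    rfl
  | succ L ih =>
    intro u
    show ((G.neighborFinset u).val.map (WL G π0 (s + L))).bind
        (fun d => (phi σ s L d).map
          (fun l => wlProj (L+1) (WL G π0 (s + (L+1)) u) :: l)) = _
    rw [Multiset.bind_map]
    have hproj : wlProj (L+1) (WL G π0 (s + (L+1)) u) = WL G π0 s u :=
      wlProj_WL G π0 (L+1) s u
    rw [Aw_succ]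
    rw [bind_val]
    apply Finset.sum_congr rfl
    intro v _
    rw [ih v, hproj]

/-- rounds of WL needed to determine `t` rounds of `WWL^ℓ` -/
def Tt (ℓ : ℕ) : ℕ → ℕ
  | 0 => 0
  | t+1 => Tt ℓ t + ℓ

/-- conversion from WL colors (at round `Tt ℓ t`) to `WWL^ℓ` colors at round `t`;
graph-independent. -/
noncomputable def psi (σ : Type) (ℓ : ℕ) : (t : ℕ) → WLColorType σ (Tt ℓ t) → ColorType σ t
  | 0, c => c
  | t+1, c =>
    (psi σ ℓ t (wlProj ℓ c),
      ∑ L ∈ (Finset.Icc 1 ℓ).attach,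
        (phi σ (Tt ℓ t) L.1
            (wlProj' (by have := Finset.mem_Icc.mp L.2; omega : Tt ℓ t + L.1 ≤ Tt ℓ t + ℓ) c)).map
          (fun l => (l.map (psi σ ℓ t)).reverse))

lemma psi_WL {σ : Type} (G : SimpleGraph V) [DecidableRel G.Adj] (π0 : V → σ) (ℓ : ℕ) :
    ∀ (t : ℕ) (u : V), psi σ ℓ t (WL G π0 (Tt ℓ t) u) = WWL G ℓ π0 t u := by
  intro t
  induction t with
  | zero => intro u; rfl
  | succ t ih =>
    intro u
    show (psi σ ℓ t (wlProj ℓ (WL G π0 (Tt ℓ t + ℓ) u)), _) = (WWL G ℓ π0 t u, _)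
    have h1 : psi σ ℓ t (wlProj ℓ (WL G π0 (Tt ℓ t + ℓ) u)) = WWL G ℓ π0 t u := by
      rw [wlProj_WL]; exact ih u
    refine Prod.ext h1 ?_
    show (∑ L ∈ (Finset.Icc 1 ℓ).attach,
        (phi σ (Tt ℓ t) L.1 (wlProj' _ (WL G π0 (Tt ℓ t + ℓ) u))).map
          (fun l => (l.map (psi σ ℓ t)).reverse)) = walkColors G ℓ (WWL G ℓ π0 t) u
    have hWWL : (WWL G ℓ π0 t : V → ColorType σ t) =
        fun v => psi σ ℓ t (WL G π0 (Tt ℓ t) v) := by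
      funext v; exact (ih v).symm
    calc (∑ L ∈ (Finset.Icc 1 ℓ).attach,
          (phi σ (Tt ℓ t) L.1 (wlProj' _ (WL G π0 (Tt ℓ t + ℓ) u))).map
            (fun l => (l.map (psi σ ℓ t)).reverse))
        = ∑ L ∈ (Finset.Icc 1 ℓ).attach,
            (Aw G (WL G π0 (Tt ℓ t)) L.1 u).map
              (fun l => (l.map (psi σ ℓ t)).reverse) := by
          apply Finset.sum_congr rfl
          intro L _
          rw [wlProj'_WL, phi_WL]
      _ = ∑ L ∈ Finset.Icc 1 ℓ,
            (Aw G (WL G π0 (Tt ℓ t)) L u).map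
              (fun l => (l.map (psi σ ℓ t)).reverse) :=
          Finset.sum_attach (Finset.Icc 1 ℓ)
            (fun L => (Aw G (WL G π0 (Tt ℓ t)) L u).map
              (fun l => (l.map (psi σ ℓ t)).reverse))
      _ = walkColors G ℓ (WWL G ℓ π0 t) u := by
          unfold walkColors
          apply Finset.sum_congr rfl
          intro L _
          rw [hWWL, rev_sum, Aw_comp G (WL G π0 (Tt ℓ t)) (psi σ ℓ t),
            Multiset.map_map]
          rfl

/-- extract the head color of the length-2 lists (i.e. walks of length 1) -/
def pick2 {α β : Type} (f : α → β) : List α → Multiset β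
  | [a, _] => {f a}
  | _ => 0

lemma pick2_eq_zero {α β : Type} (f : α → β) (l : List α) (h : l.length ≠ 2) :
    pick2 f l = 0 := by
  match l with
  | [] => rfl
  | [_] => rfl
  | [_, _] => exact absurd rfl h
  | _ :: _ :: _ :: _ => rfl

/-- conversion from `WWL^ℓ` colors to WL colors at the same round; graph-independent. -/
def Fconv (σ : Type) : (t : ℕ) → ColorType σ t → WLColorType σ t
  | 0, c => c
  | t+1, c => (Fconv σ t c.1, c.2.bind (pick2 (Fconv σ t)))

lemma multiset_sum_bind {α β γ : Type*} (s : Finset γ) (m : γ → Multiset α)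
    (h : α → Multiset β) : (∑ x ∈ s, m x).bind h = ∑ x ∈ s, (m x).bind h := by
  induction s using Finset.cons_induction with
  | empty => simp
  | cons a s ha ih => simp [Finset.sum_insert ha, Multiset.add_bind, ih]

lemma fwl_one (G : SimpleGraph V) [DecidableRel G.Adj] (w0 u : V) :
    G.finsetWalkLength 1 w0 u =
      if h : G.Adj w0 u then {SimpleGraph.Walk.cons h SimpleGraph.Walk.nil} else ∅ := by
  ext p
  rw [SimpleGraph.mem_finsetWalkLength_iff]
  split
  · rename_i had
    simp only [Finset.mem_singleton]
    constructor
    · intro hp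
      cases p with
      | nil => simp at hp
      | cons h q =>
        have hq : q.length = 0 := by simpa using hp
        have hx := SimpleGraph.Walk.eq_of_length_eq_zero hq
        subst hx
        have : q = SimpleGraph.Walk.nil :=
          SimpleGraph.Walk.nil_iff_eq_nil.mp (SimpleGraph.Walk.length_eq_zero_iff.mp hq)
        subst this
        rfl
    · rintro rfl; rfl
  · rename_i had
    simp only [Finset.notMem_empty, iff_false]
    intro hp
    cases p with
    | nil => simp at hp
    | cons h q =>
      have hq : q.length = 0 := by simpa using hp
      have hx := SimpleGraph.Walk.eq_of_length_eq_zero hq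
      subst hx
      exact had h

lemma Fconv_WWL {σ : Type} (G : SimpleGraph V) [DecidableRel G.Adj] (π0 : V → σ)
    (ℓ : ℕ) (hℓ : 1 ≤ ℓ) :
    ∀ (t : ℕ) (u : V), Fconv σ t (WWL G ℓ π0 t u) = WL G π0 t u := by
  intro t
  induction t with
  | zero => intro u; rfl
  | succ t ih =>
    intro u
    refine Prod.ext (ih u) ?_
    show (walkColors G ℓ (WWL G ℓ π0 t) u).bind (pick2 (Fconv σ t)) =
      (G.neighborFinset u).val.map (WL G π0 t)
    set c := WWL G ℓ π0 t with hc
    have key : ∀ L ∈ Finset.Icc 1 ℓ, L ≠ 1 →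
        (∑ w0 : V, (G.finsetWalkLength L w0 u).val.map fun p => p.support.map c).bind
          (pick2 (Fconv σ t)) = 0 := by
      intro L _ hL1
      rw [multiset_sum_bind]
      apply Finset.sum_eq_zero
      intro w0 _
      rw [Multiset.bind_map]
      have hz : ∀ p ∈ (G.finsetWalkLength L w0 u).val,
          pick2 (Fconv σ t) (p.support.map c) = (fun _ => (0 : Multiset _)) p := by
        intro p hp
        apply pick2_eq_zero
        rw [List.length_map, SimpleGraph.Walk.length_support,
          SimpleGraph.mem_finsetWalkLength_iff.mp hp]
        omega
      rw [Multiset.bind_congr hz, Multiset.bind_zero]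
    unfold walkColors
    rw [multiset_sum_bind,
      Finset.sum_eq_single 1 key
        (fun h => absurd (Finset.mem_Icc.mpr ⟨le_refl 1, hℓ⟩) h),
      multiset_sum_bind]
    have step : ∀ w0 : V,
        ((G.finsetWalkLength 1 w0 u).val.map fun p => p.support.map c).bind
          (pick2 (Fconv σ t)) =
        if G.Adj w0 u then ({Fconv σ t (c w0)} : Multiset (WLColorType σ t)) else 0 := by
      intro w0
      rw [Multiset.bind_map, fwl_one]
      split
      · rename_i had
        rw [Finset.singleton_val, Multiset.singleton_bind]
        simp only [SimpleGraph.Walk.support_cons, SimpleGraph.Walk.support_nil,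
          List.map_cons, List.map_nil]
        rfl
      · simp
    rw [Finset.sum_congr rfl (fun w0 _ => step w0), ← Finset.sum_filter]
    have hnb : Finset.univ.filter (fun w0 => G.Adj w0 u) = G.neighborFinset u := by
      ext w
      simp [SimpleGraph.adj_comm]
    rw [hnb, ← bind_val, Multiset.bind_singleton]
    exact Multiset.map_congr rfl fun w _ => ih w

/-- For every `ℓ ≥ 1`, the stable coloring of `WWL^ℓ` has exactly
the same distinguishing power as the stable coloring of classical 1-WL.  Two vertices
are distinguished by the stabilized refinement iff they get different colors at some
round; graphs are compared via the multisets of vertex colors. -/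
theorem WWL_stable_equiv_WL_stable (ℓ : ℕ) (hℓ : 1 ≤ ℓ) :
    (∀ (G : SimpleGraph V) [DecidableRel G.Adj] {σ : Type} (π0 : V → σ) (u v : V),
        (∃ t, WL G π0 t u ≠ WL G π0 t v) ↔ (∃ t, WWL G ℓ π0 t u ≠ WWL G ℓ π0 t v)) ∧
      (∀ (G : SimpleGraph V) [DecidableRel G.Adj]
          {W : Type} [Fintype W] [DecidableEq W] (H : SimpleGraph W) [DecidableRel H.Adj],
        (∃ t, Multiset.map (WL G (fun _ => ()) t) Finset.univ.val ≠
              Multiset.map (WL H (fun _ => ()) t) Finset.univ.val) ↔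
          (∃ t, Multiset.map (WWL G ℓ (fun _ => ()) t) Finset.univ.val ≠
                Multiset.map (WWL H ℓ (fun _ => ()) t) Finset.univ.val)) := by
  constructor
  · intro G _ σ π0 u v
    constructor
    · rintro ⟨t, ht⟩
      exact ⟨t, fun h =>
        ht (by rw [← Fconv_WWL G π0 ℓ hℓ t u, ← Fconv_WWL G π0 ℓ hℓ t v, h])⟩
    · rintro ⟨t, ht⟩
      exact ⟨Tt ℓ t, fun h =>
        ht (by rw [← psi_WL G π0 ℓ t u, ← psi_WL G π0 ℓ t v, h])⟩
  · intro G _ W _ _ H _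
    constructor
    · rintro ⟨t, ht⟩
      refine ⟨t, fun h => ht ?_⟩
      have hG : Multiset.map (WL G (fun _ => ()) t) Finset.univ.val
          = Multiset.map (Fconv Unit t)
              (Multiset.map (WWL G ℓ (fun _ => ()) t) Finset.univ.val) := by
        rw [Multiset.map_map]
        exact Multiset.map_congr rfl fun w _ => (Fconv_WWL G _ ℓ hℓ t w).symm
      have hH : Multiset.map (WL H (fun _ => ()) t) Finset.univ.val
          = Multiset.map (Fconv Unit t)
              (Multiset.map (WWL H ℓ (fun _ => ()) t) Finset.univ.val) := by
        rw [Multiset.map_map]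
        exact Multiset.map_congr rfl fun w _ => (Fconv_WWL H _ ℓ hℓ t w).symm
      rw [hG, hH, h]
    · rintro ⟨t, ht⟩
      refine ⟨Tt ℓ t, fun h => ht ?_⟩
      have hG : Multiset.map (WWL G ℓ (fun _ => ()) t) Finset.univ.val
          = Multiset.map (psi Unit ℓ t)
              (Multiset.map (WL G (fun _ => ()) (Tt ℓ t)) Finset.univ.val) := by
        rw [Multiset.map_map]
        exact Multiset.map_congr rfl fun w _ => (psi_WL G _ ℓ t w).symm
      have hH : Multiset.map (WWL H ℓ (fun _ => ()) t) Finset.univ.val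
          = Multiset.map (psi Unit ℓ t)
              (Multiset.map (WL H (fun _ => ()) (Tt ℓ t)) Finset.univ.val) := by
        rw [Multiset.map_map]
        exact Multiset.map_congr rfl fun w _ => (psi_WL H _ ℓ t w).symm
      rw [hG, hH, h]


end RSNN
end
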